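/- If a quadratic irrational α has purely periodic continued fraction [ā₀, a₁, …, aₙ] (period a₀, a₁, …, aₙ repeated), then -1/α', where α' is the conjugate of α, has purely periodic continued fraction with the reversed period [āₙ, …, a₁, a₀]. -/

import Mathlib

/-- The sequence of complete quotients of the continued fraction algorithm. -/
noncomputable def cfX (x : ℝ) : ℕ → ℝ
  | 0 => x
  | n + 1 =>
    if cfX x n - ⌊cfX x n⌋ = 0 then 0 else 1 / (cfX x n - ⌊cfX x n⌋)

/-- The partial quotients (continued fraction expansion) of a real number. -/
noncomputable def cfA (x : ℝ) (n : ℕ) : ℤ := ⌊cfX x n⌋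

lemma cfX_zero (x : ℝ) : cfX x 0 = x := rfl

lemma cfX_succ (x : ℝ) (n : ℕ) : cfX x (n+1) =
    if cfX x n - ⌊cfX x n⌋ = 0 then 0 else 1 / (cfX x n - ⌊cfX x n⌋) := rfl

lemma cfX_irr {x : ℝ} (h : Irrational x) : ∀ k, Irrational (cfX x k)
  | 0 => h
  | k+1 => by
    have ih := cfX_irr h k
    have hf : Irrational (cfX x k - ⌊cfX x k⌋) := ih.sub_intCast _
    rw [cfX_succ, if_neg hf.ne_zero, one_div]
    exact hf.inv

lemma cfX_succ' {x : ℝ} (h : Irrational x) (k : ℕ) :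
    cfX x (k+1) = 1 / (cfX x k - ⌊cfX x k⌋) := by
  have hf : Irrational (cfX x k - ⌊cfX x k⌋) := (cfX_irr h k).sub_intCast _
  rw [cfX_succ, if_neg hf.ne_zero]

lemma cfX_gt_one {x : ℝ} (h : Irrational x) (k : ℕ) : 1 < cfX x (k+1) := by
  have hf : Irrational (cfX x k - ⌊cfX x k⌋) := (cfX_irr h k).sub_intCast _
  have h0 : 0 ≤ cfX x k - ⌊cfX x k⌋ := by
    have := Int.floor_le (cfX x k); linarith
  have h1 : cfX x k - ⌊cfX x k⌋ < 1 := by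
    have := Int.lt_floor_add_one (cfX x k); linarith
  rw [cfX_succ' h]
  exact one_lt_one_div (lt_of_le_of_ne h0 (Ne.symm hf.ne_zero)) h1

lemma cfX_rec {x : ℝ} (h : Irrational x) (k : ℕ) :
    cfX x k = (cfA x k : ℝ) + 1 / cfX x (k+1) := by
  have hf : Irrational (cfX x k - ⌊cfX x k⌋) := (cfX_irr h k).sub_intCast _
  rw [cfX_succ' h, one_div_one_div, cfA]; ring

lemma cfX_shift (x : ℝ) (k : ℕ) : ∀ m, cfX (cfX x k) m = cfX x (k + m)
  | 0 => rfl
  | m+1 => by rw [cfX_succ, cfX_shift x k m, ← cfX_succ]; ring_nf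

lemma cfA_shift (x : ℝ) (k m : ℕ) : cfA (cfX x k) m = cfA x (k + m) := by
  unfold cfA; rw [cfX_shift]

lemma cfA_ge_one {x : ℝ} (h : Irrational x) (k : ℕ) : 1 ≤ cfA x (k+1) :=
  Int.le_floor.mpr (by exact_mod_cast (cfX_gt_one h k).le)

lemma cf_dist : ∀ (k : ℕ) (x y : ℝ), Irrational x → Irrational y →
    (∀ i, cfA x i = cfA y i) → |x - y| ≤ (1/4 : ℝ)^k := by
  intro k
  induction k with
  | zero =>
    intro x y hx hy hiff
    have h0 : ⌊x⌋ = ⌊y⌋ := hiff 0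
    have h1 := Int.floor_le x
    have h2 := Int.lt_floor_add_one x
    have h3 := Int.floor_le y
    have h4 := Int.lt_floor_add_one y
    rw [h0] at h1 h2
    rw [pow_zero, abs_le]
    constructor <;> linarith
  | succ k ih =>
    intro x y hx hy hiff
    set x1 := cfX x 1 with hx1def
    set y1 := cfX y 1 with hy1def
    set x2 := cfX x 2 with hx2def
    set y2 := cfX y 2 with hy2def
    have hx1 : 1 < x1 := cfX_gt_one hx 0
    have hy1 : 1 < y1 := cfX_gt_one hy 0
    have hx2 : 1 < x2 := cfX_gt_one hx 1
    have hy2 : 1 < y2 := cfX_gt_one hy 1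
    have e0x : x = (cfA x 0 : ℝ) + 1 / x1 := cfX_rec hx 0
    have e0y : y = (cfA y 0 : ℝ) + 1 / y1 := cfX_rec hy 0
    have e1x : x1 = (cfA x 1 : ℝ) + 1 / x2 := cfX_rec hx 1
    have e1y : y1 = (cfA y 1 : ℝ) + 1 / y2 := cfX_rec hy 1
    have ha1 : (1 : ℤ) ≤ cfA x 1 := cfA_ge_one hx 0
    have ha0 : cfA x 0 = cfA y 0 := hiff 0
    have ha1' : cfA x 1 = cfA y 1 := hiff 1
    -- key algebraic identity
    have hx1ne : x1 ≠ 0 := by linarith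
    have hy1ne : y1 ≠ 0 := by linarith
    have hx2ne : x2 ≠ 0 := by linarith
    have hy2ne : y2 ≠ 0 := by linarith
    have step1 : x - y = (y1 - x1) / (x1 * y1) := by
      rw [e0x, e0y, ha0]; field_simp; ring
    have step2 : y1 - x1 = (x2 - y2) / (x2 * y2) := by
      rw [e1x, e1y, ha1']; field_simp; ring
    have key : x - y = (x2 - y2) / (x1 * y1 * x2 * y2) := by
      rw [step1, step2]; ring
    -- denominator bounds
    have ha1R : (1:ℝ) ≤ (cfA x 1 : ℝ) := by exact_mod_cast ha1
    have hxx : 2 < x1 * x2 := by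
      have : x1 * x2 = (cfA x 1 : ℝ) * x2 + 1 := by rw [e1x]; field_simp
      nlinarith
    have hyy : 2 < y1 * y2 := by
      have : y1 * y2 = (cfA y 1 : ℝ) * y2 + 1 := by rw [e1y]; field_simp
      nlinarith [show (1:ℝ) ≤ (cfA y 1 : ℝ) from by rw [← ha1']; exact_mod_cast ha1]
    have hD : 4 < x1 * y1 * x2 * y2 := by nlinarith
    have hIH : |x2 - y2| ≤ (1/4:ℝ)^k := by
      apply ih x2 y2 (cfX_irr hx 2) (cfX_irr hy 2)
      intro i
      have : cfA (cfX x 2) i = cfA (cfX y 2) i := by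
        rw [cfA_shift, cfA_shift]; exact hiff (2 + i)
      rwa [← hx2def, ← hy2def] at this
    have habs : |x - y| = |x2 - y2| / (x1 * y1 * x2 * y2) := by
      rw [key, abs_div, abs_of_pos (by linarith : (0:ℝ) < x1 * y1 * x2 * y2)]
    rw [habs, pow_succ]
    rw [div_le_iff₀ (by linarith : (0:ℝ) < x1 * y1 * x2 * y2)]
    have h4 : (0:ℝ) ≤ |x2 - y2| := abs_nonneg _
    nlinarith [pow_pos (show (0:ℝ) < 1/4 by norm_num) k]

lemma cf_unique {x y : ℝ} (hx : Irrational x) (hy : Irrational y)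
    (hiff : ∀ i, cfA x i = cfA y i) : x = y := by
  by_contra hne
  have hpos : 0 < |x - y| := abs_pos.mpr (sub_ne_zero.mpr hne)
  obtain ⟨k, hk⟩ := exists_pow_lt_of_lt_one hpos (by norm_num : (1/4:ℝ) < 1)
  exact absurd (cf_dist k x y hx hy hiff) (not_le.mpr hk)

/-- sequence of conjugates of the complete quotients -/
noncomputable def conjSeq (x' : ℝ) (a : ℕ → ℤ) : ℕ → ℝ
  | 0 => x'
  | k+1 => 1 / (conjSeq x' a k - a k)

lemma conjSeq_zero (x' : ℝ) (a : ℕ → ℤ) : conjSeq x' a 0 = x' := rfl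
lemma conjSeq_succ (x' : ℝ) (a : ℕ → ℤ) (k : ℕ) :
    conjSeq x' a (k+1) = 1 / (conjSeq x' a k - a k) := rfl

/-- an irrational cannot satisfy a nontrivial integer linear equation -/
lemma irr_no_int_linear {t : ℝ} (h : Irrational t) {P Q : ℤ} (hP : P ≠ 0)
    (heq : (P:ℝ) * t + Q = 0) : False := by
  apply h
  refine ⟨(-Q : ℚ) / (P : ℚ), ?_⟩
  have hPR : (P:ℝ) ≠ 0 := Int.cast_ne_zero.mpr hP
  push_cast
  field_simp
  linarith

lemma irr_linear_coeffs {t : ℝ} (h : Irrational t) {P Q : ℤ}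
    (heq : (P:ℝ) * t + Q = 0) : P = 0 ∧ Q = 0 := by
  by_cases hP : P = 0
  · subst hP
    simp only [Int.cast_zero, zero_mul, zero_add] at heq
    exact ⟨rfl, by exact_mod_cast heq⟩
  · exact absurd heq (fun he => irr_no_int_linear h hP he)


/-- If a quadratic irrational `α` has purely periodic continued fraction with period
`a 0, a 1, …, a n`, then `-1/α'` has purely periodic continued fraction with the
reversed period `a n, …, a 1, a 0`. -/
theorem neg_inv_conj_reversed_period (α α' : ℝ) (hα : Irrational α)
    (A B C : ℤ) (hA : A ≠ 0)
    (hroot : (A : ℝ) * α ^ 2 + (B : ℝ) * α + (C : ℝ) = 0)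
    (hroot' : (A : ℝ) * α' ^ 2 + (B : ℝ) * α' + (C : ℝ) = 0)
    (hne : α' ≠ α)
    (n : ℕ) (a : ℕ → ℤ)
    (hvals : ∀ i : ℕ, i ≤ n → cfA α i = a i)
    (hper : ∀ m : ℕ, cfA α (m + (n + 1)) = cfA α m) :
    (∀ i : ℕ, i ≤ n → cfA (-1 / α') i = a (n - i)) ∧
      (∀ m : ℕ, cfA (-1 / α') (m + (n + 1)) = cfA (-1 / α') m) := by
  classical
  set aseq : ℕ → ℤ := fun k => cfA α k with haseq
  have haper : ∀ k, aseq (k + (n+1)) = aseq k := hper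
  have hxirr : ∀ k, Irrational (cfX α k) := cfX_irr hα
  -- the complete quotients are periodic
  have hXper1 : cfX α (n+1) = α := by
    apply cf_unique (hxirr (n+1)) hα
    intro i
    rw [cfA_shift α (n+1) i, show (n+1) + i = i + (n+1) from by ring]
    exact hper i
  -- all partial quotients are ≥ 1
  have ha1 : ∀ k, 1 ≤ aseq k := by
    intro k
    have h1 : aseq k = cfA α (k + (n+1)) := (hper k).symm
    rw [h1]
    exact cfA_ge_one hα (k + n)
  have haR : ∀ k, (1:ℝ) ≤ (aseq k : ℝ) := fun k => by exact_mod_cast ha1 k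
  -- α' is irrational
  have hAR : (A:ℝ) ≠ 0 := Int.cast_ne_zero.mpr hA
  have hsum : (A:ℝ) * (α + α') + B = 0 := by
    have hfac : (α - α') * ((A:ℝ)*(α+α') + B) = 0 := by linear_combination hroot - hroot'
    rcases mul_eq_zero.mp hfac with h | h
    · exact absurd (by linarith : α' = α) hne
    · exact h
  have hα' : Irrational α' := by
    have he : α' = (((-B : ℚ)/(A:ℚ) : ℚ) : ℝ) - α := by
      push_cast
      field_simp
      linarith
    rw [he]
    exact hα.ratCast_sub _
  -- the invariant about the conjugate sequence
  have hInv : ∀ k, Irrational (conjSeq α' aseq k) ∧ conjSeq α' aseq k ≠ cfX α k ∧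
      ∃ P Q R : ℤ, P ≠ 0 ∧ (P:ℝ) * (cfX α k)^2 + (Q:ℝ) * (cfX α k) + (R:ℝ) = 0 ∧
        (P:ℝ) * (conjSeq α' aseq k)^2 + (Q:ℝ) * (conjSeq α' aseq k) + (R:ℝ) = 0 := by
    intro k
    induction k with
    | zero =>
      refine ⟨hα', hne, A, B, C, hA, ?_, ?_⟩
      · rw [cfX_zero]; exact hroot
      · rw [conjSeq_zero]; exact hroot'
    | succ k ih =>
      obtain ⟨hirr, hne', P, Q, R, hP, hq, hq'⟩ := ih
      have htirr : Irrational (cfX α k) := hxirr k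
      have hta : cfX α k - (aseq k : ℝ) ≠ 0 := sub_ne_zero.mpr (htirr.ne_int _)
      have ht'a : conjSeq α' aseq k - (aseq k : ℝ) ≠ 0 := sub_ne_zero.mpr (hirr.ne_int _)
      have hs : cfX α (k+1) = 1/(cfX α k - (aseq k : ℝ)) := cfX_succ' hα k
      have hs' : conjSeq α' aseq (k+1) = 1/(conjSeq α' aseq k - (aseq k : ℝ)) :=
        conjSeq_succ α' aseq k
      have hirr1 : Irrational (conjSeq α' aseq (k+1)) := by
        rw [hs', one_div]; exact (hirr.sub_intCast _).inv
      have hne1 : conjSeq α' aseq (k+1) ≠ cfX α (k+1) := by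
        rw [hs', hs]
        intro hcon
        apply hne'
        field_simp at hcon
        linarith
      refine ⟨hirr1, hne1, P*(aseq k)^2 + Q*(aseq k) + R, 2*P*(aseq k) + Q, P, ?_, ?_, ?_⟩
      · intro h0
        have h0R : (P:ℝ)*(aseq k : ℝ)^2 + (Q:ℝ)*(aseq k : ℝ) + (R:ℝ) = 0 := by
          exact_mod_cast congrArg (fun z : ℤ => (z:ℝ)) h0
        have hfac : (cfX α k - (aseq k:ℝ)) * ((P:ℝ)*(cfX α k + (aseq k:ℝ)) + Q) = 0 := by
          linear_combination hq - h0R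
        rcases mul_eq_zero.mp hfac with h | h
        · exact hta h
        · exact irr_no_int_linear htirr hP
            (show (P:ℝ) * cfX α k + ((P * aseq k + Q : ℤ):ℝ) = 0 by
              push_cast; linear_combination h)
      · rw [hs]
        push_cast
        field_simp
        linear_combination hq
      · rw [hs']
        push_cast
        field_simp
        linear_combination hq'
  have hX'irr : ∀ k, Irrational (conjSeq α' aseq k) := fun k => (hInv k).1
  have hX'ne : ∀ k, conjSeq α' aseq k ≠ cfX α k := fun k => (hInv k).2.1
  -- the conjugate sequence returns to α' after one period
  have hX'N : conjSeq α' aseq (n+1) = α' := by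
    obtain ⟨hirrN, hneN, P, Q, R, hP, hqN, hq'N⟩ := hInv (n+1)
    rw [hXper1] at hqN hneN
    have hPR : (P:ℝ) ≠ 0 := Int.cast_ne_zero.mpr hP
    have hlin : ((A*Q - P*B : ℤ):ℝ) * α + ((A*R - P*C : ℤ):ℝ) = 0 := by
      push_cast
      linear_combination (A:ℝ) * hqN - (P:ℝ) * hroot
    obtain ⟨h1, h2⟩ := irr_linear_coeffs hα hlin
    have h1R : (A:ℝ)*(Q:ℝ) - (P:ℝ)*(B:ℝ) = 0 := by exact_mod_cast congrArg (fun z : ℤ => (z:ℝ)) h1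
    have h2R : (A:ℝ)*(R:ℝ) - (P:ℝ)*(C:ℝ) = 0 := by exact_mod_cast congrArg (fun z : ℤ => (z:ℝ)) h2
    have hz : (P:ℝ) * ((A:ℝ)*(conjSeq α' aseq (n+1))^2 + (B:ℝ)*(conjSeq α' aseq (n+1)) + (C:ℝ)) = 0 := by
      linear_combination (A:ℝ) * hq'N - (conjSeq α' aseq (n+1)) * h1R - h2R
    have hroots : (A:ℝ)*(conjSeq α' aseq (n+1))^2 + (B:ℝ)*(conjSeq α' aseq (n+1)) + (C:ℝ) = 0 :=
      (mul_eq_zero.mp hz).resolve_left hPR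
    have hsum2 : (A:ℝ)*(conjSeq α' aseq (n+1) + α) + B = 0 := by
      have hfac : (conjSeq α' aseq (n+1) - α) * ((A:ℝ)*(conjSeq α' aseq (n+1) + α) + B) = 0 := by
        linear_combination hroots - hroot
      rcases mul_eq_zero.mp hfac with h | h
      · exact absurd (by linarith : conjSeq α' aseq (n+1) = α) hneN
      · exact h
    have hz2 : (A:ℝ) * (conjSeq α' aseq (n+1) - α') = 0 := by
      linear_combination hsum2 - hsum
    have := (mul_eq_zero.mp hz2).resolve_left hAR
    linarith
  -- periodicity of the conjugate sequence
  have hX'per : ∀ k, conjSeq α' aseq (k + (n+1)) = conjSeq α' aseq k := by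
    intro k
    induction k with
    | zero => simpa [conjSeq_zero] using hX'N
    | succ k ih =>
      have he : k + 1 + (n+1) = (k + (n+1)) + 1 := by ring
      rw [he, conjSeq_succ, conjSeq_succ, ih, haper k]
  have hX'perm : ∀ m k, conjSeq α' aseq (k + m*(n+1)) = conjSeq α' aseq k := by
    intro m
    induction m with
    | zero => intro k; simp
    | succ m ih =>
      intro k
      have he : k + (m+1)*(n+1) = (k + m*(n+1)) + (n+1) := by ring
      rw [he, hX'per, ih]
  -- some conjugate is below its partial quotient
  have hex : ∃ k, conjSeq α' aseq k < (aseq k : ℝ) := by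
    by_contra hcon
    push_neg at hcon
    have hgt : ∀ k, (aseq k:ℝ) < conjSeq α' aseq k := fun k =>
      lt_of_le_of_ne (hcon k) (Ne.symm ((hX'irr k).ne_int _))
    have hX'gt1 : ∀ k, 1 < conjSeq α' aseq k := fun k => lt_of_le_of_lt (haR k) (hgt k)
    set d : ℕ → ℝ := fun k => |cfX α k - conjSeq α' aseq k| with hd
    have hmono : ∀ k, d k < d (k+1) := by
      intro k
      have hu : 1 < cfX α (k+1) := cfX_gt_one hα k
      have hv : 1 < conjSeq α' aseq (k+1) := hX'gt1 (k+1)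
      have hune : cfX α (k+1) ≠ 0 := by linarith
      have hvne : conjSeq α' aseq (k+1) ≠ 0 := by linarith
      have hx : cfX α k - (aseq k:ℝ) = 1 / cfX α (k+1) := by
        rw [cfX_rec hα k]
        show (cfA α k : ℝ) + 1 / cfX α (k+1) - (cfA α k : ℝ) = 1 / cfX α (k+1)
        ring
      have hx' : conjSeq α' aseq k - (aseq k:ℝ) = 1 / conjSeq α' aseq (k+1) := by
        rw [conjSeq_succ, one_div_one_div]
      have hsub : cfX α k - conjSeq α' aseq k =
          (conjSeq α' aseq (k+1) - cfX α (k+1)) / (cfX α (k+1) * conjSeq α' aseq (k+1)) := by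
        have he : cfX α k - conjSeq α' aseq k = 1/cfX α (k+1) - 1/conjSeq α' aseq (k+1) := by
          rw [← hx, ← hx']; ring
        rw [he]
        field_simp
      have hdk : d k = d (k+1) / (cfX α (k+1) * conjSeq α' aseq (k+1)) := by
        show |cfX α k - conjSeq α' aseq k| = |cfX α (k+1) - conjSeq α' aseq (k+1)| / _
        rw [hsub, abs_div, abs_of_pos (by nlinarith : (0:ℝ) < cfX α (k+1) * conjSeq α' aseq (k+1)),
          abs_sub_comm]
      have hdpos : 0 < d (k+1) := by
        apply abs_pos.mpr
        exact sub_ne_zero.mpr (Ne.symm (hX'ne (k+1)))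
      rw [hdk]
      exact div_lt_self hdpos (by nlinarith)
    have hlt : d 0 < d (n+1) := strictMono_nat_of_lt_succ hmono (Nat.succ_pos n)
    have heq : d (n+1) = d 0 := by
      show |cfX α (n+1) - conjSeq α' aseq (n+1)| = |cfX α 0 - conjSeq α' aseq 0|
      rw [hXper1, hX'N, cfX_zero, conjSeq_zero]
    rw [heq] at hlt
    exact lt_irrefl _ hlt
  obtain ⟨k0, hk0⟩ := hex
  -- after that, conjugates fall into (-1, 0)
  have hstep : ∀ m, conjSeq α' aseq m < 0 →
      -1 < conjSeq α' aseq (m+1) ∧ conjSeq α' aseq (m+1) < 0 := by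
    intro m hm
    rw [conjSeq_succ]
    have hden : conjSeq α' aseq m - (aseq m:ℝ) < -1 := by have := haR m; linarith
    have hdne : conjSeq α' aseq m - (aseq m:ℝ) ≠ 0 := by linarith
    have hinv : (1:ℝ) / (conjSeq α' aseq m - (aseq m:ℝ)) < 0 := one_div_neg.mpr (by linarith)
    refine ⟨?_, hinv⟩
    have hmul : (1 / (conjSeq α' aseq m - (aseq m:ℝ))) * (conjSeq α' aseq m - (aseq m:ℝ)) = 1 := by
      field_simp
    nlinarith
  have hneg1 : conjSeq α' aseq (k0+1) < 0 := by
    rw [conjSeq_succ]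
    exact one_div_neg.mpr (by linarith)
  have hint : ∀ j, -1 < conjSeq α' aseq (k0+1+(j+1)) ∧ conjSeq α' aseq (k0+1+(j+1)) < 0 := by
    intro j
    induction j with
    | zero => exact hstep (k0+1) hneg1
    | succ j ih =>
      have := hstep (k0+1+(j+1)) ih.2
      rwa [show k0+1+(j+1)+1 = k0+1+(j+1+1) from by ring] at this
  have hall : ∀ k, -1 < conjSeq α' aseq k ∧ conjSeq α' aseq k < 0 := by
    intro k
    have hmul1 : (k0+2) * 1 ≤ (k0+2)*(n+1) := Nat.mul_le_mul_left _ (by omega)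
    obtain ⟨j, hj⟩ : ∃ j, k + (k0+2)*(n+1) = k0 + 1 + (j+1) := ⟨k + (k0+2)*(n+1) - (k0+2), by omega⟩
    have hb := hint j
    rw [← hj, hX'perm (k0+2) k] at hb
    exact hb
  -- the reversed sequence
  have hy1 : ∀ k, 1 < -1/(conjSeq α' aseq k) := by
    intro k
    obtain ⟨h1, h2⟩ := hall k
    have he : -1/(conjSeq α' aseq k) = 1/(-(conjSeq α' aseq k)) := by ring
    rw [he]
    exact one_lt_one_div (by linarith) (by linarith)
  have hyrec : ∀ k, -1/(conjSeq α' aseq (k+1)) = (aseq k : ℝ) + 1/(-1/(conjSeq α' aseq k)) := by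
    intro k
    obtain ⟨h1, h2⟩ := hall k
    have h3 : conjSeq α' aseq k ≠ 0 := ne_of_lt h2
    have hd : conjSeq α' aseq k - (aseq k:ℝ) ≠ 0 := by have := haR k; linarith
    rw [conjSeq_succ]
    field_simp
    ring
  have hyfloor : ∀ k, ⌊-1/(conjSeq α' aseq (k+1))⌋ = aseq k := by
    intro k
    rw [hyrec k]
    have h1 := hy1 k
    have h2 : (0:ℝ) < 1/(-1/(conjSeq α' aseq k)) := one_div_pos.mpr (by linarith)
    have h3 : 1/(-1/(conjSeq α' aseq k)) < 1 := by
      rw [div_lt_one (by linarith)]; linarith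
    rw [Int.floor_intCast_add]
    rw [Int.floor_eq_zero_iff.mpr ⟨le_of_lt h2, h3⟩, add_zero]
  -- compute cfX of -1/α'
  have hβX : ∀ j, j ≤ n+1 → cfX (-1/α') j = -1/(conjSeq α' aseq (n+1-j)) := by
    intro j
    induction j with
    | zero =>
      intro _
      rw [cfX_zero, Nat.sub_zero, hX'N]
    | succ j ihj =>
      intro hj
      have ih := ihj (by omega)
      have hidx : n+1-j = (n-j)+1 := by omega
      rw [hidx] at ih
      rw [cfX_succ, ih, hyfloor (n-j)]
      have h2 : (0:ℝ) < 1/(-1/(conjSeq α' aseq (n-j))) := one_div_pos.mpr (by linarith [hy1 (n-j)])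
      have hfr : -1/(conjSeq α' aseq ((n-j)+1)) - (aseq (n-j):ℝ) = 1/(-1/(conjSeq α' aseq (n-j))) := by
        rw [hyrec (n-j)]; ring
      rw [hfr, if_neg (ne_of_gt h2), one_div_one_div]
      have hidx2 : n+1-(j+1) = n - j := by omega
      rw [hidx2]
  constructor
  · intro i hi
    show ⌊cfX (-1/α') i⌋ = a (n - i)
    rw [hβX i (by omega), show n+1-i = (n-i)+1 from by omega, hyfloor (n-i)]
    exact hvals (n-i) (by omega)
  · intro m
    have hβfix : cfX (-1/α') (n+1) = -1/α' := by
      rw [hβX (n+1) le_rfl, Nat.sub_self, conjSeq_zero]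
    show ⌊cfX (-1/α') (m + (n+1))⌋ = ⌊cfX (-1/α') m⌋
    rw [show m + (n+1) = (n+1) + m from by ring, ← cfX_shift, hβfix]
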